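/- Let n ≥ 1 and let K_n be the complete simple graph on {1, …, n}. The map sending a realizable edge {0,1}-labelling α of K_n to the binary relation '(i = j) or α({i,j}) = 1' on {1, …, n} is a bijection between the set of realizable edge {0,1}-labellings of K_n and the set of equivalence relations on {1, …, n}. Consequently, the number of vertices of the classical polytope C_{K_n} equals the number of partitions of an n-element set (the n-th Bell number). -/
import Mathlib


open SimpleGraph

/-- The element of `G.edgeSet` corresponding to an adjacent pair of vertices. -/
def edgeMk {V : Type*} (G : SimpleGraph V) {v w : V} (h : G.Adj v w) : G.edgeSet :=
  ⟨s(v, w), (SimpleGraph.mem_edgeSet G).mpr h⟩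

/-- `α` is the equality labelling of the vertex labelling `lam` (label 1 ↔ `True`). -/
def IsEqualityLabelling {V : Type*} (G : SimpleGraph V) {Λ : Type*} (lam : V → Λ)
    (α : G.edgeSet → Prop) : Prop :=
  ∀ v w (h : G.Adj v w), (α (edgeMk G h) ↔ lam v = lam w)

/-- `α` is realizable: it is the equality labelling of some vertex labelling into some set. -/
def Realizable {V : Type*} (G : SimpleGraph V) (α : G.edgeSet → Prop) : Prop :=
  ∃ (Λ : Type) (lam : V → Λ), IsEqualityLabelling G lam α

/-- The complete graph `K_n` on `{1, …, n}`, modelled as `Fin n`. -/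
abbrev Kgraph (n : ℕ) : SimpleGraph (Fin n) := ⊤

/-- The relation associated to an edge labelling `α` of `K_n`:
`i ∼ j` iff `i = j` or `α({i,j}) = 1`. -/
def relOf (n : ℕ) (α : (Kgraph n).edgeSet → Prop) : Fin n → Fin n → Prop :=
  fun i j => i = j ∨ ∃ h : (Kgraph n).Adj i j, α (edgeMk (Kgraph n) h)

lemma relOf_iff_of_realizable {n : ℕ} {α : (Kgraph n).edgeSet → Prop} {Λ : Type}
    {lam : Fin n → Λ} (hl : IsEqualityLabelling (Kgraph n) lam α) (i j : Fin n) :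
    relOf n α i j ↔ lam i = lam j := by
  constructor
  · rintro (rfl | ⟨h, hα⟩)
    · rfl
    · exact (hl i j h).1 hα
  · intro hij
    by_cases hij' : i = j
    · exact Or.inl hij'
    · exact Or.inr ⟨hij', (hl i j hij').2 hij⟩

lemma bijOn_relOf (n : ℕ) :
    Set.BijOn (relOf n) {α | Realizable (Kgraph n) α}
      {R : Fin n → Fin n → Prop | Equivalence R} := by
  refine ⟨?_, ?_, ?_⟩
  · rintro α ⟨Λ, lam, hl⟩
    refine ⟨fun i => (relOf_iff_of_realizable hl i i).2 rfl,
      fun h => (relOf_iff_of_realizable hl _ _).2 ((relOf_iff_of_realizable hl _ _).1 h).symm,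
      fun h h' => (relOf_iff_of_realizable hl _ _).2
        (((relOf_iff_of_realizable hl _ _).1 h).trans ((relOf_iff_of_realizable hl _ _).1 h'))⟩
  · intro α₁ _ α₂ _ hEq
    funext e
    obtain ⟨e, he⟩ := e
    induction e using Sym2.ind with
    | _ i j =>
      have hne : (Kgraph n).Adj i j := (SimpleGraph.mem_edgeSet _).1 he
      have h1 : relOf n α₁ i j = relOf n α₂ i j := by rw [hEq]
      have key : ∀ α : (Kgraph n).edgeSet → Prop, relOf n α i j ↔ α ⟨s(i, j), he⟩ := by
        intro α
        constructor
        · rintro (rfl | ⟨h, hα⟩)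
          · exact absurd rfl hne
          · exact hα
        · intro hα
          exact Or.inr ⟨hne, hα⟩
      exact propext ((key α₁).symm.trans ((h1 ▸ Iff.rfl : relOf n α₁ i j ↔ relOf n α₂ i j).trans
        (key α₂)))
  · rintro R hR
    set α : (Kgraph n).edgeSet → Prop :=
      fun e => Sym2.lift ⟨fun i j => R i j, fun i j => propext ⟨fun h => hR.symm h,
        fun h => hR.symm h⟩⟩ e.1 with hα
    have hαmk : ∀ (i j : Fin n) (h : (Kgraph n).Adj i j), α (edgeMk (Kgraph n) h) ↔ R i j := by
      intro i j h
      simp [hα, edgeMk]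
    have hreal : Realizable (Kgraph n) α := by
      refine ⟨Quot R, Quot.mk R, fun v w h => ?_⟩
      rw [hαmk v w h, Quot.eq, hR.eqvGen_iff]
    refine ⟨α, hreal, ?_⟩
    funext i j
    apply propext
    constructor
    · rintro (rfl | ⟨h, hα'⟩)
      · exact hR.refl i
      · exact (hαmk i j h).1 hα'
    · intro hij
      by_cases hij' : i = j
      · exact Or.inl hij'
      · exact Or.inr ⟨hij', (hαmk i j hij').2 hij⟩

/-- The map `α ↦ relOf α` is a bijection from the realizable edge `{0,1}`-labellings of
`K_n` onto the equivalence relations on `{1, …, n}`; consequently, the number of vertices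
of the classical polytope `C_{K_n}` (i.e. of realizable labellings) equals the number of
partitions of an `n`-element set (the `n`-th Bell number). -/
theorem stmt14 (n : ℕ) (hn : 1 ≤ n) :
    Set.BijOn (relOf n) {α | Realizable (Kgraph n) α} {R : Fin n → Fin n → Prop | Equivalence R} ∧
    {α : (Kgraph n).edgeSet → Prop | Realizable (Kgraph n) α}.ncard =
      {P : Set (Set (Fin n)) | Setoid.IsPartition P}.ncard := by
  have hbij := bijOn_relOf n
  refine ⟨hbij, ?_⟩
  have e1 : ↥{α : (Kgraph n).edgeSet → Prop | Realizable (Kgraph n) α} ≃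
      ↥{R : Fin n → Fin n → Prop | Equivalence R} := hbij.equiv _
  have e2 : ↥{R : Fin n → Fin n → Prop | Equivalence R} ≃ Setoid (Fin n) :=
    { toFun := fun R => ⟨R.1, R.2⟩
      invFun := fun s => ⟨s.r, s.iseqv⟩
      left_inv := fun R => rfl
      right_inv := fun s => by cases s; rfl }
  have e3 : Setoid (Fin n) ≃ {C : Set (Set (Fin n)) // Setoid.IsPartition C} :=
    (Setoid.Partition.orderIso (Fin n)).toEquiv
  rw [← Nat.card_coe_set_eq, ← Nat.card_coe_set_eq]
  exact Nat.card_congr ((e1.trans e2).trans e3)
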